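/- arXiv:1109.2291 — 2 statements merged into one kernel-verified Lean document; each statement's English description precedes it below -/
import Mathlib

section
/- Let G be a graph of diameter at most 2 with edges e₁, …, e_m, and for each non-adjacent pair (v_i, v_j) define the path polynomial P_{i,j} = ∑_{e_a, e_b : v_i−e_a−e_b−v_j is a path in G} (x_a − x_b)² ∈ ℚ[x₁, …, x_m], with P_{i,j} = 1 for adjacent pairs. Let f_G = ∏_{i<j} P_{i,j}. Then rc(G) ≤ 2 if and only if there exists a point p ∈ ℚ^m with at most 2 distinct coordinates such that f_G(p) ≠ 0. -/
/-- A walk is rainbow under edge coloring `c` if its edges have pairwise distinct colors. -/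
def SimpleGraph.Walk.IsRainbow {V α : Type*} {G : SimpleGraph V} (c : Sym2 V → α)
    {u v : V} (p : G.Walk u v) : Prop :=
  p.edges.Pairwise fun e f => c e ≠ c f

/-- A graph is rainbow connected under edge coloring `c` if every pair of vertices is joined
by a path all of whose edges have pairwise distinct colors. -/
def SimpleGraph.RainbowConnected {V α : Type*} (G : SimpleGraph V) (c : Sym2 V → α) : Prop :=
  ∀ u v : V, ∃ p : G.Walk u v, p.IsPath ∧ p.IsRainbow c

theorem two_rainbow_connectivity_iff_graph_polynomial_nonzero
    (n : ℕ) (G : SimpleGraph (Fin n)) [DecidableRel G.Adj]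
    (hdiam : ∀ i j : Fin n, i ≠ j → ¬ G.Adj i j → ∃ w, G.Adj i w ∧ G.Adj w j) :
    (∃ c : Sym2 (Fin n) → Fin 2, G.RainbowConnected c) ↔
      ∃ p : Sym2 (Fin n) → ℚ,
        Set.ncard {c : ℚ | ∃ e ∈ G.edgeSet, p e = c} ≤ 2 ∧
        (∏ i : Fin n, ∏ j ∈ Finset.univ.filter (fun j => i < j),
          (if G.Adj i j then (1 : ℚ) else
            ∑ w ∈ Finset.univ.filter (fun w => G.Adj i w ∧ G.Adj w j),
              (p s(i, w) - p s(w, j)) ^ 2)) ≠ 0 := by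
  constructor
  · rintro ⟨c, hc⟩
    refine ⟨fun e => ((c e).val : ℚ), ?_, ?_⟩
    · have hsub : {x : ℚ | ∃ e ∈ G.edgeSet, ((c e).val : ℚ) = x} ⊆ {0, 1} := by
        rintro x ⟨e, -, rfl⟩
        have h2 := (c e).isLt
        interval_cases h : (c e).val <;> simp
      calc Set.ncard {x : ℚ | ∃ e ∈ G.edgeSet, ((c e).val : ℚ) = x}
          ≤ Set.ncard ({0, 1} : Set ℚ) := Set.ncard_le_ncard hsub (Set.toFinite _)
        _ ≤ 2 := by rw [Set.ncard_pair (by norm_num : (0:ℚ) ≠ 1)]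
    · rw [Finset.prod_ne_zero_iff]
      intro i _
      rw [Finset.prod_ne_zero_iff]
      intro j hj
      rw [Finset.mem_filter] at hj
      have hij : i < j := hj.2
      split_ifs with hadj
      · exact one_ne_zero
      · obtain ⟨P, hP, hR⟩ := hc i j
        -- P must have length exactly 2
        match P, hP, hR with
        | SimpleGraph.Walk.nil, _, _ => exact absurd rfl hij.ne
        | SimpleGraph.Walk.cons h SimpleGraph.Walk.nil, _, _ => exact absurd h hadj
        | SimpleGraph.Walk.cons (v := w) h1 (SimpleGraph.Walk.cons h2 SimpleGraph.Walk.nil),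
            hP, hR =>
          have hcne : c s(i, w) ≠ c s(w, j) := by
            simp only [SimpleGraph.Walk.IsRainbow, SimpleGraph.Walk.edges_cons,
              SimpleGraph.Walk.edges_nil, List.pairwise_cons, List.mem_singleton] at hR
            exact hR.1 _ rfl
          have hpos : (0 : ℚ) < ∑ w ∈ Finset.univ.filter (fun w => G.Adj i w ∧ G.Adj w j),
              (((c s(i, w)).val : ℚ) - ((c s(w, j)).val : ℚ)) ^ 2 := by
            refine Finset.sum_pos' (fun _ _ => sq_nonneg _) ⟨w, ?_, ?_⟩
            · simp [h1, h2]
            · have : ((c s(i, w)).val : ℚ) ≠ ((c s(w, j)).val : ℚ) := by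
                exact_mod_cast fun h => hcne (Fin.val_injective (by exact_mod_cast h))
              exact (sq_nonneg _).lt_of_ne (Ne.symm (pow_ne_zero 2 (sub_ne_zero.mpr this)))
          exact ne_of_gt hpos
        | SimpleGraph.Walk.cons h1 (SimpleGraph.Walk.cons h2 (SimpleGraph.Walk.cons h3 q)),
            hP, hR =>
          -- three pairwise distinct colors in Fin 2: impossible
          exact absurd hR (by
            simp only [SimpleGraph.Walk.IsRainbow, SimpleGraph.Walk.edges_cons,
              List.pairwise_cons]
            rintro ⟨ha, hb, -⟩
            have h12 := ha _ List.mem_cons_self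
            have h13 := ha _ (List.mem_cons_of_mem _ List.mem_cons_self)
            have h23 := hb _ List.mem_cons_self
            have hfin : ∀ x y z : Fin 2, x ≠ y → x ≠ z → y ≠ z → False := by decide
            exact hfin _ _ _ h12 h13 h23)
  · rintro ⟨p, hcard, hprod⟩
    -- each non-adjacent pair (i < j) admits a witness w with distinct p-values
    have key : ∀ i j : Fin n, i < j → ¬G.Adj i j →
        ∃ w, G.Adj i w ∧ G.Adj w j ∧ p s(i, w) ≠ p s(w, j) := by
      intro i j hij hadj
      rw [Finset.prod_ne_zero_iff] at hprod
      have h1 := hprod i (Finset.mem_univ i)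
      rw [Finset.prod_ne_zero_iff] at h1
      have h2 := h1 j (Finset.mem_filter.mpr ⟨Finset.mem_univ j, hij⟩)
      rw [if_neg hadj] at h2
      by_contra hcon
      push_neg at hcon
      apply h2
      apply Finset.sum_eq_zero
      intro w hw
      rw [Finset.mem_filter] at hw
      rw [hcon w hw.2.1 hw.2.2]
      ring
    set S : Set ℚ := {x | ∃ e ∈ G.edgeSet, p e = x} with hS
    have hSfin : S.Finite := by
      apply Set.Finite.subset ((Set.toFinite G.edgeSet).image p)
      rintro x ⟨e, he, rfl⟩
      exact ⟨e, he, rfl⟩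
    classical
    set a : ℚ := if h : S.Nonempty then h.choose else 0 with ha
    set c : Sym2 (Fin n) → Fin 2 := fun e => if p e = a then 0 else 1 with hcdef
    have hdist : ∀ e f : Sym2 (Fin n), e ∈ G.edgeSet → f ∈ G.edgeSet →
        p e ≠ p f → c e ≠ c f := by
      intro e f he hf hpef
      have hne : S.Nonempty := ⟨p e, e, he, rfl⟩
      have haS : a ∈ S := by rw [ha, dif_pos hne]; exact hne.choose_spec
      have hcases : a = p e ∨ a = p f := by
        by_contra hcon
        push_neg at hcon
        have hsub : ({p e, p f, a} : Set ℚ) ⊆ S := by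
          rintro x (rfl | rfl | rfl)
          · exact ⟨e, he, rfl⟩
          · exact ⟨f, hf, rfl⟩
          · exact haS
        have h3 : ({p e, p f, a} : Set ℚ).ncard = 3 := by
          rw [Set.ncard_insert_of_notMem (by simp [hpef, Ne.symm hcon.1]),
            Set.ncard_pair (Ne.symm hcon.2)]
        have := Set.ncard_le_ncard hsub hSfin
        omega
      rcases hcases with h | h
      · have ce : c e = 0 := if_pos h.symm
        have cf : c f = 1 := if_neg (fun hh => hpef (hh.trans h).symm)
        rw [ce, cf]; decide
      · have ce : c e = 1 := if_neg (fun hh => hpef (hh.trans h))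
        have cf : c f = 0 := if_pos h.symm
        rw [ce, cf]; decide
    refine ⟨c, fun u v => ?_⟩
    rcases eq_or_ne u v with rfl | huv
    · exact ⟨SimpleGraph.Walk.nil, SimpleGraph.Walk.IsPath.nil, by
        simp [SimpleGraph.Walk.IsRainbow]⟩
    by_cases hadj : G.Adj u v
    · exact ⟨SimpleGraph.Walk.cons hadj SimpleGraph.Walk.nil,
        (SimpleGraph.Path.singleton hadj).2, by
          simp [SimpleGraph.Walk.IsRainbow]⟩
    · rcases lt_or_gt_of_ne huv with hlt | hlt
      · obtain ⟨w, h1, h2, hp⟩ := key u v hlt hadj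
        refine ⟨SimpleGraph.Walk.cons h1 (SimpleGraph.Walk.cons h2 SimpleGraph.Walk.nil),
          ?_, ?_⟩
        · simp [SimpleGraph.Walk.isPath_def, h1.ne, h2.ne, huv]
        · simp only [SimpleGraph.Walk.IsRainbow, SimpleGraph.Walk.edges_cons,
            SimpleGraph.Walk.edges_nil, List.pairwise_cons, List.mem_singleton,
            List.not_mem_nil, List.Pairwise.nil]
          exact ⟨fun e he => he ▸ hdist _ _ h1 h2 hp, by simp⟩
      · obtain ⟨w, h1, h2, hp⟩ := key v u hlt (fun h => hadj h.symm)
        refine ⟨SimpleGraph.Walk.cons h2.symm (SimpleGraph.Walk.cons h1.symm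
          SimpleGraph.Walk.nil), ?_, ?_⟩
        · simp [SimpleGraph.Walk.isPath_def, h1.ne', h2.ne', huv]
        · have hp' : p s(u, w) ≠ p s(w, v) := by
            rw [Sym2.eq_swap, show s(w, v) = s(v, w) from Sym2.eq_swap]
            exact fun hh => hp hh.symm
          simp only [SimpleGraph.Walk.IsRainbow, SimpleGraph.Walk.edges_cons,
            SimpleGraph.Walk.edges_nil, List.pairwise_cons, List.mem_singleton,
            List.not_mem_nil, List.Pairwise.nil]
          exact ⟨fun e he => he ▸ hdist _ _ h2.symm h1.symm hp', by simp⟩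
end

section
/- Let V_{m,3} ⊆ ℚ^m be the set of points with at most 2 distinct coordinate values, and let I_{m,3} be the ideal of polynomials in ℚ[x₁,…,x_m] vanishing on V_{m,3}. For a graph G of diameter at most 2, with f_G the product of path polynomials P_{i,j} (where P_{i,j} = 1 for adjacent (v_i, v_j) and P_{i,j} = ∑_{paths v_i−e_a−e_b−v_j} (x_a − x_b)² otherwise), f_G ∈ I_{m,3} if and only if rc(G) ≥ 3. -/
lemma rainbow_length_le_two {V : Type*} {G : SimpleGraph V} (c : Sym2 V → Fin 2)
    {u v : V} (p : G.Walk u v) (h : p.IsRainbow c) : p.length ≤ 2 := by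
  have hn : (p.edges.map c).Nodup := List.pairwise_map.mpr h
  have := hn.length_le_card
  simpa [SimpleGraph.Walk.length_edges] using this

lemma rc_iff {n : ℕ} (G : SimpleGraph (Fin n)) (c : Sym2 (Fin n) → Fin 2) :
    G.RainbowConnected c ↔ ∀ i j : Fin n, i ≠ j → ¬ G.Adj i j →
      ∃ w, G.Adj i w ∧ G.Adj w j ∧ c s(i, w) ≠ c s(w, j) := by
  constructor
  · intro h i j hne hna
    obtain ⟨p, hp, hr⟩ := h i j
    match p with
    | .nil => exact absurd rfl hne
    | .cons hadj .nil => exact absurd hadj hna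
    | .cons (v := w) hadj (.cons (v := b) hadj2 q) =>
      have hlen : q.length = 0 := by
        have := rainbow_length_le_two c _ hr
        simp only [SimpleGraph.Walk.length_cons] at this
        omega
      have hb : b = j := SimpleGraph.Walk.eq_of_length_eq_zero hlen
      subst hb
      have hq : q.edges = [] := List.eq_nil_of_length_eq_zero (by simp [hlen])
      rw [SimpleGraph.Walk.IsRainbow] at hr
      simp [hq] at hr
      exact ⟨w, hadj, hadj2, hr⟩
  · intro h i j
    by_cases hij : i = j
    · subst hij
      exact ⟨.nil, SimpleGraph.Walk.IsPath.nil, List.Pairwise.nil⟩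
    by_cases hadj : G.Adj i j
    · refine ⟨.cons hadj .nil, ?_, ?_⟩
      · simp [SimpleGraph.Walk.isPath_def, hij]
      · simp [SimpleGraph.Walk.IsRainbow]
    · obtain ⟨w, h1, h2, h3⟩ := h i j hij hadj
      refine ⟨.cons h1 (.cons h2 .nil), ?_, ?_⟩
      · simp [SimpleGraph.Walk.isPath_def, hij, h1.ne, h2.ne]
      · simp [SimpleGraph.Walk.IsRainbow, h3]

open MvPolynomial in
/-- `f_G` lies in the vanishing ideal of the set of points with at most two distinct
coordinates iff `rc(G) ≥ 3`. -/
theorem graph_polynomial_mem_vanishing_ideal_iff_rc_ge_three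
    (n : ℕ) (G : SimpleGraph (Fin n)) [DecidableRel G.Adj]
    (hdiam : ∀ i j : Fin n, i ≠ j → ¬ G.Adj i j → ∃ w, G.Adj i w ∧ G.Adj w j)
    (fG : MvPolynomial G.edgeSet ℚ)
    (hfG : fG = ∏ i : Fin n, ∏ j ∈ Finset.univ.filter (fun j => i < j),
        (if G.Adj i j then (1 : MvPolynomial G.edgeSet ℚ) else
          ∑ w : {w : Fin n // G.Adj i w ∧ G.Adj w j},
            (X (⟨s(i, (w : Fin n)), G.mem_edgeSet.2 w.2.1⟩ : G.edgeSet)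
              - X (⟨s((w : Fin n), j), G.mem_edgeSet.2 w.2.2⟩ : G.edgeSet)) ^ 2)) :
    (∀ p : G.edgeSet → ℚ, Set.ncard (Set.range p) ≤ 2 → eval p fG = 0) ↔
      ¬ ∃ c : Sym2 (Fin n) → Fin 2, G.RainbowConnected c := by
  have key : ∀ p : G.edgeSet → ℚ,
      (eval p fG = 0 ↔ ∃ i j : Fin n, i < j ∧ ¬ G.Adj i j ∧
        ∀ w : {w : Fin n // G.Adj i w ∧ G.Adj w j},
          p ⟨s(i, (w : Fin n)), G.mem_edgeSet.2 w.2.1⟩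
            = p ⟨s((w : Fin n), j), G.mem_edgeSet.2 w.2.2⟩) := by
    intro p
    rw [hfG, map_prod, Finset.prod_eq_zero_iff]
    constructor
    · rintro ⟨i, -, hi⟩
      rw [map_prod, Finset.prod_eq_zero_iff] at hi
      obtain ⟨j, hj, hij⟩ := hi
      rw [Finset.mem_filter] at hj
      refine ⟨i, j, hj.2, ?_⟩
      by_cases hadj : G.Adj i j
      · simp [hadj] at hij
      · refine ⟨hadj, ?_⟩
        rw [if_neg hadj] at hij
        simp only [map_sum, map_pow, map_sub, eval_X] at hij
        intro w
        have := (Finset.sum_eq_zero_iff_of_nonneg (fun w _ => sq_nonneg _)).mp hij w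
          (Finset.mem_univ w)
        exact sub_eq_zero.mp ((pow_eq_zero_iff (two_ne_zero)).mp this)
    · rintro ⟨i, j, hlt, hadj, hall⟩
      refine ⟨i, Finset.mem_univ i, ?_⟩
      rw [map_prod, Finset.prod_eq_zero_iff]
      refine ⟨j, Finset.mem_filter.mpr ⟨Finset.mem_univ j, hlt⟩, ?_⟩
      rw [if_neg hadj]
      simp only [map_sum, map_pow, map_sub, eval_X]
      apply Finset.sum_eq_zero
      intro w _
      rw [hall w, sub_self]
      simp
  constructor
  · rintro hvan ⟨c, hc⟩
    set p : G.edgeSet → ℚ := fun e => ((c e.val).val : ℚ) with hpdef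
    have hsub : Set.range p ⊆ ({0, 1} : Set ℚ) := by
      rintro x ⟨e, rfl⟩
      have h2 : (c e.val).val = 0 ∨ (c e.val).val = 1 := by omega
      rcases h2 with h | h <;> simp [hpdef, h]
    have hcard : Set.ncard (Set.range p) ≤ 2 := by
      calc Set.ncard (Set.range p) ≤ Set.ncard ({0, 1} : Set ℚ) :=
            Set.ncard_le_ncard hsub (Set.toFinite _)
        _ = 2 := Set.ncard_pair (by norm_num)
    obtain ⟨i, j, hlt, hadj, hall⟩ := (key p).mp (hvan p hcard)
    obtain ⟨w, h1, h2w, h3⟩ := (rc_iff G c).mp hc i j hlt.ne hadj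
    exact h3 (Fin.val_injective (Nat.cast_injective (hall ⟨w, h1, h2w⟩)))
  · intro hnc p hcard
    by_contra hne0
    apply hnc
    have hfin : (Set.range p).Finite := Set.finite_range p
    have hxy : ∃ x y : ℚ, Set.range p ⊆ {x, y} := by
      obtain h | h | h : (Set.range p).ncard = 0 ∨ (Set.range p).ncard = 1 ∨
          (Set.range p).ncard = 2 := by omega
      · exact ⟨0, 0, by rw [(Set.ncard_eq_zero hfin).mp h]; simp⟩
      · obtain ⟨a, ha⟩ := Set.ncard_eq_one.mp h
        exact ⟨a, a, by rw [ha]; simp⟩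
      · obtain ⟨a, b, -, hab⟩ := Set.ncard_eq_two.mp h
        exact ⟨a, b, hab.subset⟩
    obtain ⟨x, y, hxy⟩ := hxy
    have hval : ∀ e : G.edgeSet, p e = x ∨ p e = y := fun e => by
      simpa using hxy (Set.mem_range_self e)
    set c : Sym2 (Fin n) → Fin 2 :=
      fun e => if h : e ∈ G.edgeSet then (if p ⟨e, h⟩ = x then 0 else 1) else 0 with hcdef
    have hkey : ∀ e f : G.edgeSet, (p e = p f ↔ c e.val = c f.val) := by
      intro e f
      have he2 : c e.val = if p e = x then 0 else 1 := by
        simp only [hcdef]; rw [dif_pos e.2]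
      have hf2 : c f.val = if p f = x then 0 else 1 := by
        simp only [hcdef]; rw [dif_pos f.2]
      rw [he2, hf2]
      by_cases he : p e = x <;> by_cases hf : p f = x
      · simp [he, hf]
      · simp only [if_pos he, if_neg hf]
        constructor
        · intro h; exact absurd (he ▸ h).symm hf
        · intro h; exact absurd h (by decide)
      · simp only [if_neg he, if_pos hf]
        constructor
        · intro h; exact absurd (hf ▸ h) he
        · intro h; exact absurd h (by decide)
      · have h1 : p e = y := (hval e).resolve_left he
        have h2 : p f = y := (hval f).resolve_left hf
        simp [he, hf, h1, h2]
    have hK : ∀ i j : Fin n, i < j → ¬ G.Adj i j →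
        ∃ w : {w : Fin n // G.Adj i w ∧ G.Adj w j},
          p ⟨s(i, (w : Fin n)), G.mem_edgeSet.2 w.2.1⟩
            ≠ p ⟨s((w : Fin n), j), G.mem_edgeSet.2 w.2.2⟩ := by
      intro i j hlt ha
      by_contra hcon
      push_neg at hcon
      exact hne0 ((key p).mpr ⟨i, j, hlt, ha, hcon⟩)
    refine ⟨c, (rc_iff G c).mpr ?_⟩
    intro i j hne hadj
    rcases lt_or_gt_of_ne hne with h | h
    · obtain ⟨⟨w, hw1, hw2⟩, hpw⟩ := hK i j h hadj
      exact ⟨w, hw1, hw2, fun hcc => hpw ((hkey _ _).mpr hcc)⟩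
    · obtain ⟨⟨w, hw1, hw2⟩, hpw⟩ := hK j i h (fun h' => hadj h'.symm)
      refine ⟨w, hw2.symm, hw1.symm, fun hcc => hpw ((hkey _ _).mpr ?_)⟩
      show c s(j, w) = c s(w, i)
      have e1 : s(j, w) = s(w, j) := Sym2.eq_swap
      have e2 : s(w, i) = s(i, w) := Sym2.eq_swap
      rw [e1, e2]
      exact hcc.symm
end
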